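/- Let S : ℝ^m → ℝ^{a×a}, T : ℝ^m → ℝ^{a×b}, R : ℝ^m → ℝ^{b×b} be matrix-valued maps differentiable at a point z ∈ ℝ^m, with R(z) invertible, and let P_N(z) = [[S(z), T(z)], [T(z)ᵀ, R(z)]] denote the corresponding block-matrix-valued map. Then the Schur complement P(z) = S(z) − T(z)R(z)⁻¹T(z)ᵀ is differentiable at z and, for every direction w ∈ ℝ^m, its directional derivative satisfies DP(z)[w] = [I_a, −T(z)R(z)⁻¹] · DP_N(z)[w] · [I_a; −R(z)⁻¹T(z)ᵀ], where DP_N(z)[w] is the blockwise directional derivative of P_N at z in direction w. -/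

import Mathlib

open Matrix

noncomputable def mulLin (n p q : ℕ) :
    (Fin n → Fin p → ℝ) →ₗ[ℝ] (Fin p → Fin q → ℝ) →ₗ[ℝ] (Fin n → Fin q → ℝ) :=
  LinearMap.mk₂ ℝ (fun X Y => Matrix.of.symm (Matrix.of X * Matrix.of Y))
    (fun X₁ X₂ Y => by
      funext i j
      simp [Matrix.mul_apply, add_mul, Finset.sum_add_distrib])
    (fun c X Y => by
      funext i j
      simp [Matrix.mul_apply, Finset.mul_sum, mul_assoc])
    (fun X Y₁ Y₂ => by
      funext i j
      simp [Matrix.mul_apply, mul_add, Finset.sum_add_distrib])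
    (fun c X Y => by
      funext i j
      simp [Matrix.mul_apply, Finset.mul_sum, mul_left_comm])

noncomputable def mulCLM (n p q : ℕ) :
    (Fin n → Fin p → ℝ) →L[ℝ] (Fin p → Fin q → ℝ) →L[ℝ] (Fin n → Fin q → ℝ) :=
  LinearMap.toContinuousLinearMap
  { toFun := fun X => LinearMap.toContinuousLinearMap (mulLin n p q X)
    map_add' := fun X₁ X₂ => by
      refine ContinuousLinearMap.ext fun Y => ?_
      simp [LinearMap.coe_toContinuousLinearMap']
    map_smul' := fun c X => by
      refine ContinuousLinearMap.ext fun Y => ?_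
      simp [LinearMap.coe_toContinuousLinearMap'] }

@[simp] lemma mulCLM_apply (n p q : ℕ) (X : Fin n → Fin p → ℝ) (Y : Fin p → Fin q → ℝ) :
    mulCLM n p q X Y = Matrix.of.symm (Matrix.of X * Matrix.of Y) := by
  simp [mulCLM, mulLin]

noncomputable def trCLM (n p : ℕ) :
    (Fin n → Fin p → ℝ) →L[ℝ] (Fin p → Fin n → ℝ) :=
  LinearMap.toContinuousLinearMap
  { toFun := fun X => Matrix.of.symm (Matrix.of X)ᵀ
    map_add' := fun _ _ => rfl
    map_smul' := fun _ _ => rfl }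

@[simp] lemma trCLM_apply (n p : ℕ) (X : Fin n → Fin p → ℝ) :
    trCLM n p X = Matrix.of.symm (Matrix.of X)ᵀ := by
  simp [trCLM]
  rfl

@[simp] lemma of_sub' {n p : ℕ} (x y : Fin n → Fin p → ℝ) :
    Matrix.of (x - y) = Matrix.of x - Matrix.of y := rfl

@[simp] lemma of_add' {n p : ℕ} (x y : Fin n → Fin p → ℝ) :
    Matrix.of (x + y) = Matrix.of x + Matrix.of y := rfl

@[simp] lemma of_zero' {n p : ℕ} :
    Matrix.of (0 : Fin n → Fin p → ℝ) = 0 := rfl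

lemma diff_det {m n : ℕ} {f : (Fin m → ℝ) → Fin n → Fin n → ℝ} {z : Fin m → ℝ}
    (hf : ∀ i j, DifferentiableAt ℝ (fun y => f y i j) z) :
    DifferentiableAt ℝ (fun y => (Matrix.of (f y)).det) z := by
  simp only [Matrix.det_apply']
  apply DifferentiableAt.fun_sum
  intro σ _
  exact DifferentiableAt.const_mul
    ((HasFDerivAt.finset_prod (fun i _ => (hf (σ i) i).hasFDerivAt)).differentiableAt) _

theorem stmt6_schur_complement_derivative (m a b : ℕ)
    (S : (Fin m → ℝ) → Fin a → Fin a → ℝ)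
    (T : (Fin m → ℝ) → Fin a → Fin b → ℝ)
    (R : (Fin m → ℝ) → Fin b → Fin b → ℝ)
    (z : Fin m → ℝ)
    (S' : (Fin m → ℝ) →L[ℝ] (Fin a → Fin a → ℝ))
    (T' : (Fin m → ℝ) →L[ℝ] (Fin a → Fin b → ℝ))
    (R' : (Fin m → ℝ) →L[ℝ] (Fin b → Fin b → ℝ))
    (hS : HasFDerivAt S S' z) (hT : HasFDerivAt T T' z) (hR : HasFDerivAt R R' z)
    (hRz : IsUnit (Matrix.of (R z))) :
    ∃ P' : (Fin m → ℝ) →L[ℝ] (Fin a → Fin a → ℝ),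
      HasFDerivAt
        (fun y =>
          Matrix.of.symm
            (Matrix.of (S y) - Matrix.of (T y) * (Matrix.of (R y))⁻¹ * (Matrix.of (T y))ᵀ))
        P' z ∧
      ∀ w : Fin m → ℝ,
        Matrix.of (P' w) =
          Matrix.fromCols (1 : Matrix (Fin a) (Fin a) ℝ)
              (-(Matrix.of (T z) * (Matrix.of (R z))⁻¹)) *
            Matrix.fromBlocks (Matrix.of (S' w)) (Matrix.of (T' w)) (Matrix.of (T' w))ᵀ
              (Matrix.of (R' w)) *
            Matrix.fromRows (1 : Matrix (Fin a) (Fin a) ℝ)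
              (-((Matrix.of (R z))⁻¹ * (Matrix.of (T z))ᵀ)) := by
  classical
  have hRent : ∀ i j, DifferentiableAt ℝ (fun y => R y i j) z := fun i j =>
    differentiableAt_pi.mp (differentiableAt_pi.mp hR.differentiableAt i) j
  have hdet : DifferentiableAt ℝ (fun y => (Matrix.of (R y)).det) z := diff_det hRent
  have hUz : IsUnit (Matrix.of (R z)).det := (Matrix.isUnit_iff_isUnit_det _).mp hRz
  have hdz : (Matrix.of (R z)).det ≠ 0 := isUnit_iff_ne_zero.mp hUz
  have hadj : ∀ i j, DifferentiableAt ℝ (fun y => (Matrix.of (R y)).adjugate i j) z := by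
    intro i j
    simp only [Matrix.adjugate_apply]
    refine diff_det (f := fun y =>
      Matrix.of.symm ((Matrix.of (R y)).updateRow j (Pi.single i 1))) ?_
    intro k l
    show DifferentiableAt ℝ (fun y => ((Matrix.of (R y)).updateRow j (Pi.single i 1)) k l) z
    by_cases hk : k = j
    · simp only [Matrix.updateRow_apply, hk, if_pos rfl]
      exact differentiableAt_const _
    · simp only [Matrix.updateRow_apply, if_neg hk]
      exact hRent k l
  set N : (Fin m → ℝ) → Fin b → Fin b → ℝ :=
    fun y => Matrix.of.symm ((Matrix.of (R y))⁻¹) with hNdef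
  have hN : DifferentiableAt ℝ N z := by
    rw [differentiableAt_pi]; intro i
    rw [differentiableAt_pi]; intro j
    have heq : (fun y => N y i j)
        = fun y => ((Matrix.of (R y)).det)⁻¹ * (Matrix.of (R y)).adjugate i j := by
      funext y
      show ((Matrix.of (R y))⁻¹) i j = _
      rw [Matrix.inv_def, Matrix.smul_apply, Ring.inverse_eq_inv, smul_eq_mul]
    rw [heq]
    exact (hdet.inv hdz).mul (hadj i j)
  obtain ⟨N', hN'⟩ : ∃ N', HasFDerivAt N N' z := ⟨_, hN.hasFDerivAt⟩
  have hev : ∀ᶠ y in nhds z, (Matrix.of (R y)).det ≠ 0 :=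
    hdet.continuousAt.eventually_ne hdz
  have hprod : HasFDerivAt (fun y => mulCLM b b b (N y) (R y))
      ((mulCLM b b b).precompR _ (N z) R' + (mulCLM b b b).precompL _ N' (R z)) z :=
    (mulCLM b b b).hasFDerivAt_of_bilinear hN' hR
  have heq1 : (fun y => mulCLM b b b (N y) (R y)) =ᶠ[nhds z]
      (fun _ => Matrix.of.symm (1 : Matrix (Fin b) (Fin b) ℝ)) := by
    filter_upwards [hev] with y hy
    show Matrix.of.symm (Matrix.of (N y) * Matrix.of (R y)) = _
    have : Matrix.of (N y) = (Matrix.of (R y))⁻¹ := rfl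
    rw [this, Matrix.nonsing_inv_mul _ (isUnit_iff_ne_zero.mpr hy)]
  have hzero : (mulCLM b b b).precompR _ (N z) R' + (mulCLM b b b).precompL _ N' (R z)
      = 0 :=
    (hprod.congr_of_eventuallyEq heq1.symm).unique (hasFDerivAt_const _ _)
  have hNw : ∀ w, Matrix.of (N' w)
      = -((Matrix.of (R z))⁻¹ * Matrix.of (R' w) * (Matrix.of (R z))⁻¹) := by
    intro w
    have h0 := congrArg (fun L : (Fin m → ℝ) →L[ℝ] (Fin b → Fin b → ℝ) => Matrix.of (L w)) hzero
    simp only [ContinuousLinearMap.add_apply, ContinuousLinearMap.precompR,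
      ContinuousLinearMap.precompL, ContinuousLinearMap.coe_comp', Function.comp_apply,
      ContinuousLinearMap.flip_apply, ContinuousLinearMap.compL_apply,
      mulCLM_apply, ContinuousLinearMap.zero_apply, of_add', of_zero',
      Equiv.apply_symm_apply] at h0
    rw [add_comm] at h0
    have h1 : Matrix.of (N' w) * Matrix.of (R z) =
        -((Matrix.of (R z))⁻¹ * Matrix.of (R' w)) :=
      eq_neg_of_add_eq_zero_left h0
    calc Matrix.of (N' w)
        = Matrix.of (N' w) * (Matrix.of (R z) * (Matrix.of (R z))⁻¹) := by
          rw [Matrix.mul_nonsing_inv _ hUz, mul_one]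
      _ = (Matrix.of (N' w) * Matrix.of (R z)) * (Matrix.of (R z))⁻¹ := by
          rw [Matrix.mul_assoc]
      _ = -((Matrix.of (R z))⁻¹ * Matrix.of (R' w) * (Matrix.of (R z))⁻¹) := by
          rw [h1]; simp [Matrix.neg_mul, Matrix.mul_assoc]
  -- assemble P
  have hTt : HasFDerivAt (fun y => trCLM a b (T y)) ((trCLM a b).comp T') z :=
    ((trCLM a b).hasFDerivAt).comp z hT
  have hTN : HasFDerivAt (fun y => mulCLM a b b (T y) (N y))
      ((mulCLM a b b).precompR _ (T z) N' + (mulCLM a b b).precompL _ T' (N z)) z :=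
    (mulCLM a b b).hasFDerivAt_of_bilinear hT hN'
  have hTNT := (mulCLM a b a).hasFDerivAt_of_bilinear hTN hTt
  have hP := hS.sub hTNT
  refine ⟨_, hP.congr_of_eventuallyEq (Filter.Eventually.of_forall fun y => rfl), ?_⟩
  intro w
  have hNz : Matrix.of (N z) = (Matrix.of (R z))⁻¹ := rfl
  rw [Matrix.fromCols_mul_fromBlocks, Matrix.fromCols_mul_fromRows]
  simp only [ContinuousLinearMap.coe_sub', Pi.sub_apply, ContinuousLinearMap.add_apply,
    ContinuousLinearMap.precompR, ContinuousLinearMap.precompL,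
    ContinuousLinearMap.coe_comp', Function.comp_apply, ContinuousLinearMap.flip_apply,
    ContinuousLinearMap.compL_apply, mulCLM_apply, trCLM_apply, of_sub', of_add',
    Equiv.apply_symm_apply, hNz, hNw w]
  simp only [Matrix.one_mul, Matrix.mul_one, Matrix.neg_mul, Matrix.mul_neg,
    Matrix.add_mul, Matrix.mul_add, Matrix.mul_assoc, neg_neg]
  abel
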